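/- For every natural number n ≥ 1, z(n) = Σ_{k=n}^{κ(n)} R(k, n). -/

import Mathlib

/-- The 3x+1 map: `T x = x/2` if `x` is even, `(3x+1)/2` if `x` is odd. -/
def T (x : ℕ) : ℕ := if x % 2 = 0 then x / 2 else (3 * x + 1) / 2

/-- `m k x` is the number of indices `s` with `0 ≤ s < k` such that `T^[s] x` is odd. -/
def m (k x : ℕ) : ℕ := ((Finset.range k).filter (fun s => T^[s] x % 2 = 1)).card

/-- `R k n` is the number of residues `r ∈ {0,…,2^k − 1}` with `m k r = n` and
`3^(m j r) > 2^j` for all `1 ≤ j ≤ k`. -/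
noncomputable def R (k n : ℕ) : ℕ :=
  {r : ℕ | r < 2 ^ k ∧ m k r = n ∧ ∀ j, 1 ≤ j → j ≤ k → 2 ^ j < 3 ^ (m j r)}.ncard

/-- `σ_n = ⌊1 + (n+1)·log₂ 3⌋`. -/
noncomputable def sigmaN (n : ℕ) : ℕ := ⌊1 + ((n : ℝ) + 1) * Real.logb 2 3⌋₊

/-- `κ(n) = ⌊n·log₂ 3⌋`. -/
noncomputable def kappa (n : ℕ) : ℕ := ⌊(n : ℝ) * Real.logb 2 3⌋₊

/-- `z n` is the number of residues `r < 2^(σ_n)` with `3^(m j r) > 2^j` for all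
`1 ≤ j < σ_n` and `m (σ_n) r = n + 1`. -/
noncomputable def z (n : ℕ) : ℕ :=
  {r : ℕ | r < 2 ^ sigmaN n ∧ (∀ j, 1 ≤ j → j < sigmaN n → 2 ^ j < 3 ^ (m j r)) ∧
    m (sigmaN n) r = n + 1}.ncard



lemma T_add (x a : ℕ) : T (x + 2 * a) = T x + (if x % 2 = 1 then 3 else 1) * a := by
  unfold T
  split_ifs <;> omega

lemma m_zero (x : ℕ) : m 0 x = 0 := by simp [m]

lemma m_succ_right (k x : ℕ) :
    m (k + 1) x = m k x + (if T^[k] x % 2 = 1 then 1 else 0) := by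
  unfold m
  rw [Finset.range_add_one, Finset.filter_insert]
  split_ifs with h
  · rw [Finset.card_insert_of_notMem (by simp)]
  · simp

lemma m_succ_left (k x : ℕ) : m (k + 1) x = x % 2 + m k (T x) := by
  induction k generalizing x with
  | zero =>
      simp only [m, Finset.range_one, Finset.range_zero, Finset.filter_empty,
        Finset.card_empty]
      rcases Nat.mod_two_eq_zero_or_one x with h | h <;>
        simp [Finset.filter_singleton, h]
  | succ k ih =>
      rw [m_succ_right, ih, m_succ_right]
      rw [Function.iterate_succ_apply]
      omega

lemma iter_add (s x a : ℕ) : T^[s] (x + 2 ^ s * a) = T^[s] x + 3 ^ (m s x) * a := by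
  induction s generalizing x a with
  | zero => simp [m_zero]
  | succ s ih =>
      rw [Function.iterate_succ_apply, Function.iterate_succ_apply]
      have h2 : (2:ℕ) ^ (s+1) * a = 2 * (2 ^ s * a) := by ring
      rw [h2, T_add, m_succ_left]
      rcases Nat.mod_two_eq_zero_or_one x with h | h
      · simp [h]
        rw [ih]
      · simp [h]
        have : T x + 3 * (2 ^ s * a) = T x + 2 ^ s * (3 * a) := by ring
        rw [this, ih]
        ring

lemma parity_eq (s k x : ℕ) (hs : s < k) (a : ℕ) :
    T^[s] (x + 2 ^ k * a) % 2 = T^[s] x % 2 := by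
  have h : (2:ℕ) ^ k * a = 2 ^ s * (2 ^ (k - s) * a) := by
    rw [← mul_assoc, ← pow_add]
    congr 2
    omega
  rw [h, iter_add]
  have h2 : 2 ∣ 2 ^ (k - s) := dvd_pow_self 2 (by omega)
  obtain ⟨c, hc⟩ := h2
  rw [hc]
  have : 3 ^ m s x * (2 * c * a) = 2 * (3 ^ m s x * (c * a)) := by ring
  rw [this]
  omega

lemma parity_mod (s k x : ℕ) (hs : s < k) : T^[s] (x % 2 ^ k) % 2 = T^[s] x % 2 := by
  conv_rhs => rw [← Nat.mod_add_div x (2 ^ k)]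
  rw [parity_eq s k _ hs]

lemma m_mod (j k x : ℕ) (hj : j ≤ k) : m j (x % 2 ^ k) = m j x := by
  unfold m
  congr 1
  apply Finset.filter_congr
  intro s hs
  simp only [Finset.mem_range] at hs
  rw [parity_mod s k x (by omega)]

lemma odd_pow3 (t : ℕ) : 3 ^ t % 2 = 1 := by
  rw [Nat.pow_mod]
  simp

lemma extend (k : ℕ) (f : ℕ → ℕ) (r : ℕ) (hr : r < 2 ^ k) (d : ℕ) :
    ∃! x, x < 2 ^ (k + d) ∧ x % 2 ^ k = r ∧
      ∀ s, k ≤ s → s < k + d → T^[s] x % 2 = f s % 2 := by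
  induction d with
  | zero =>
      refine ⟨r, ⟨by simpa using hr, Nat.mod_eq_of_lt hr, fun s h1 h2 => by omega⟩, ?_⟩
      rintro y ⟨hy1, hy2, -⟩
      rw [← hy2, Nat.mod_eq_of_lt (by simpa using hy1)]
  | succ d ih =>
      obtain ⟨y, ⟨hy1, hy2, hy3⟩, hyu⟩ := ih
      set x := if T^[k + d] y % 2 = f (k + d) % 2 then y else y + 2 ^ (k + d) with hx
      have hxmod : x % 2 ^ (k + d) = y := by
        rw [hx]; split_ifs
        · exact Nat.mod_eq_of_lt hy1
        · have : y + 2 ^ (k+d) = y + 2 ^ (k+d) * 1 := by ring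
          rw [this, Nat.add_mul_mod_self_left, Nat.mod_eq_of_lt hy1]
      have hflip : T^[k + d] (y + 2 ^ (k + d)) % 2 ≠ T^[k + d] y % 2 := by
        have := iter_add (k + d) y 1
        rw [mul_one] at this
        rw [this]
        have h3 := odd_pow3 (m (k + d) y)
        omega
      have hxpar : T^[k + d] x % 2 = f (k + d) % 2 := by
        rw [hx]; split_ifs with h
        · exact h
        · have h2 : f (k + d) % 2 < 2 := Nat.mod_lt _ (by norm_num)
          have h4 : T^[k+d] y % 2 < 2 := Nat.mod_lt _ (by norm_num)
          have h5 : T^[k+d] (y + 2^(k+d)) % 2 < 2 := Nat.mod_lt _ (by norm_num)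
          omega
      refine ⟨x, ⟨?_, ?_, ?_⟩, ?_⟩
      · have : x ≤ y + 2 ^ (k + d) := by rw [hx]; split_ifs <;> omega
        have h2 : (2:ℕ) ^ (k + (d+1)) = 2 ^ (k+d) + 2 ^ (k+d) := by ring
        omega
      · have h2 : (2:ℕ) ^ k ∣ 2 ^ (k + d) := pow_dvd_pow 2 (by omega)
        rw [← hy2, ← hxmod, Nat.mod_mod_of_dvd _ h2]
      · intro s h1 h2
        rcases Nat.lt_or_ge s (k + d) with h3 | h3
        · have : T^[s] x % 2 = T^[s] y % 2 := by
            rw [hx]; split_ifs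
            · rfl
            · have := parity_eq s (k + d) y h3 1
              rw [mul_one] at this
              exact this
          rw [this]; exact hy3 s h1 h3
        · have hs : s = k + d := by omega
          rw [hs]; exact hxpar
      · rintro w ⟨hw1, hw2, hw3⟩
        have hwmod : w % 2 ^ (k + d) = y := by
          apply hyu
          refine ⟨Nat.mod_lt _ (by positivity), ?_, ?_⟩
          · have h2 : (2:ℕ) ^ k ∣ 2 ^ (k + d) := pow_dvd_pow 2 (by omega)
            rw [Nat.mod_mod_of_dvd _ h2, hw2]
          · intro s h1 h2
            rw [parity_mod s (k + d) w h2]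
            exact hw3 s h1 (by omega)
        -- w = y or y + 2^(k+d)
        have hw4 : w = y ∨ w = y + 2 ^ (k + d) := by
          have := Nat.mod_add_div w (2 ^ (k + d))
          have h2 : (2:ℕ) ^ (k + (d+1)) = 2 ^ (k+d) * 2 := by ring
          have h3 : w / 2 ^ (k + d) < 2 := by
            by_contra h4
            push_neg at h4
            have := Nat.le_div_iff_mul_le (show 0 < 2^(k+d) by positivity) |>.mp h4
            omega
          interval_cases h : w / 2 ^ (k + d) <;> omega
        have hwpar : T^[k + d] w % 2 = f (k + d) % 2 := hw3 (k+d) (by omega) (by omega)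
        rcases hw4 with h | h
        · rw [hx]; split_ifs with h5
          · exact h
          · rw [h] at hwpar; exact absurd hwpar h5
        · rw [hx]; split_ifs with h5
          · rw [h] at hwpar
            rw [← hwpar] at h5
            exact absurd h5.symm hflip
          · exact h

lemma logb_pos' : 0 < Real.logb 2 3 := Real.logb_pos (by norm_num) (by norm_num)

lemma three_rpow : ∀ t : ℕ, ((3:ℝ)) ^ t = (2:ℝ) ^ ((t:ℝ) * Real.logb 2 3) := by
  intro t
  rw [mul_comm, Real.rpow_mul (by norm_num), Real.rpow_logb (by norm_num) (by norm_num) (by norm_num),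
    Real.rpow_natCast]

lemma pow_lt_iff_le_kappa (k n : ℕ) (hn : 1 ≤ n) : 2 ^ k < 3 ^ n ↔ k ≤ kappa n := by
  have hne : (2:ℕ) ^ k ≠ 3 ^ n := by
    intro h
    rcases Nat.eq_zero_or_pos k with hk | hk
    · rw [hk] at h
      simp at h
      have : (3:ℕ)^1 ≤ 3 ^ n := Nat.pow_le_pow_right (by norm_num) hn
      omega
    · have h2 : 2 ∣ 2 ^ k := dvd_pow_self 2 (by omega)
      rw [h] at h2
      have := Nat.Prime.dvd_of_dvd_pow Nat.prime_two h2
      norm_num at this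
  have key : (2:ℕ) ^ k < 3 ^ n ↔ (k:ℝ) < (n:ℝ) * Real.logb 2 3 := by
    rw [show ((2:ℕ) ^ k < 3 ^ n) ↔ ((2:ℝ) ^ k < (3:ℝ) ^ n) by
      constructor <;> intro h
      · exact_mod_cast h
      · exact_mod_cast h]
    rw [three_rpow, ← Real.rpow_natCast 2 k]
    exact Real.rpow_lt_rpow_left_iff (by norm_num)
  constructor
  · intro h
    exact Nat.le_floor (le_of_lt (key.mp h))
  · intro h
    apply key.mpr
    have h1 : (k:ℝ) ≤ (n:ℝ) * Real.logb 2 3 := by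
      calc (k:ℝ) ≤ (kappa n : ℝ) := by exact_mod_cast h
        _ ≤ _ := Nat.floor_le (mul_nonneg (Nat.cast_nonneg n) (le_of_lt logb_pos'))
    rcases lt_or_eq_of_le h1 with h2 | h2
    · exact h2
    · exfalso
      apply hne
      have : (2:ℝ) ^ k = (3:ℝ) ^ n := by
        rw [three_rpow, ← Real.rpow_natCast 2 k, h2]
      exact_mod_cast this

lemma sigmaN_eq (n : ℕ) : sigmaN n = kappa (n + 1) + 1 := by
  unfold sigmaN kappa
  rw [add_comm 1 (((n:ℝ) + 1) * Real.logb 2 3),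
    Nat.floor_add_one (mul_nonneg (by positivity) (le_of_lt logb_pos'))]
  push_cast
  ring_nf

lemma n_le_kappa (n : ℕ) (hn : 1 ≤ n) : n ≤ kappa n := by
  rw [← pow_lt_iff_le_kappa n n hn]
  exact Nat.pow_lt_pow_left (by norm_num) (by omega)

lemma kappa_mono (n : ℕ) (hn : 1 ≤ n) : kappa n ≤ kappa (n + 1) := by
  rw [← pow_lt_iff_le_kappa _ _ (by omega)]
  have h1 : 2 ^ kappa n < 3 ^ n := (pow_lt_iff_le_kappa (kappa n) n hn).mpr le_rfl
  calc 2 ^ kappa n < 3 ^ n := h1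
    _ ≤ 3 ^ (n+1) := Nat.pow_le_pow_right (by norm_num) (by omega)

lemma m_le (k x : ℕ) : m k x ≤ k := by
  unfold m
  calc _ ≤ (Finset.range k).card := Finset.card_filter_le _ _
    _ = k := Finset.card_range k

lemma m_eventually (k x N : ℕ) (hodd : T^[k] x % 2 = 1)
    (heven : ∀ j, k < j → j < N → T^[j] x % 2 = 0) :
    ∀ j, k + 1 ≤ j → j ≤ N → m j x = m k x + 1 := by
  intro j hj1 hj2
  induction j, hj1 using Nat.le_induction with
  | base => rw [m_succ_right, if_pos hodd]
  | succ j hj ih =>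
      rw [m_succ_right, if_neg (by rw [heven j (by omega) (by omega)]; omega)]
      exact ih (by omega)

lemma m_max (N x : ℕ) (h : 1 ≤ m N x) :
    ∃ k, k < N ∧ T^[k] x % 2 = 1 ∧ (∀ j, k < j → j < N → T^[j] x % 2 = 0) ∧
      m N x = m k x + 1 := by
  classical
  unfold m at h
  set F := (Finset.range N).filter (fun s => T^[s] x % 2 = 1) with hF
  have hne : F.Nonempty := Finset.card_pos.mp (by omega)
  set k := F.max' hne with hk
  have hkF : k ∈ F := F.max'_mem hne
  rw [hF, Finset.mem_filter, Finset.mem_range] at hkF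
  have heven : ∀ j, k < j → j < N → T^[j] x % 2 = 0 := by
    intro j h1 h2
    by_contra h3
    have h4 : T^[j] x % 2 = 1 := by omega
    have h5 : j ∈ F := by rw [hF, Finset.mem_filter, Finset.mem_range]; exact ⟨h2, h4⟩
    have := F.le_max' j h5
    omega
  exact ⟨k, hkF.1, hkF.2, heven,
    m_eventually k x N hkF.2 heven N (by omega) le_rfl⟩

def Pz' (n r : ℕ) : Prop :=
  (∀ j, 1 ≤ j → j < sigmaN n → 2 ^ j < 3 ^ m j r) ∧ m (sigmaN n) r = n + 1

def PR' (n k r : ℕ) : Prop :=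
  m k r = n ∧ ∀ j, 1 ≤ j → j ≤ k → 2 ^ j < 3 ^ m j r

def PA' (n k r : ℕ) : Prop :=
  PR' n k (r % 2 ^ k) ∧ T^[k] r % 2 = 1 ∧
    ∀ j, k < j → j < sigmaN n → T^[j] r % 2 = 0

open Classical in
lemma z_card (n : ℕ) :
    z n = ((Finset.range (2 ^ sigmaN n)).filter (Pz' n)).card := by
  rw [z, ← Set.ncard_coe_finset]
  congr 1
  ext r
  simp only [Set.mem_setOf_eq, Finset.coe_filter, Finset.mem_range, Pz']

open Classical in
lemma R_card (n k : ℕ) :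
    R k n = ((Finset.range (2 ^ k)).filter (PR' n k)).card := by
  rw [R, ← Set.ncard_coe_finset]
  congr 1
  ext r
  simp only [Set.mem_setOf_eq, Finset.coe_filter, Finset.mem_range, PR']

open Classical in
lemma A_card (n k : ℕ) (hn : 1 ≤ n) (hnk : n ≤ k) (hk : k ≤ kappa n) :
    ((Finset.range (2 ^ sigmaN n)).filter (PA' n k)).card =
      ((Finset.range (2 ^ k)).filter (PR' n k)).card := by
  have hkσ : k < sigmaN n := by
    have h1 := kappa_mono n hn
    have h2 := sigmaN_eq n
    omega
  set σ := sigmaN n with hσ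
  set f : ℕ → ℕ := fun s => if s = k then 1 else 0 with hf
  have hkd : k + (σ - k) = σ := by omega
  -- the property in `extend`, for x satisfying PA'
  have hsat : ∀ x, x < 2 ^ σ → PA' n k x →
      (x < 2 ^ (k + (σ - k)) ∧ x % 2 ^ k = x % 2 ^ k ∧
        ∀ s, k ≤ s → s < k + (σ - k) → T^[s] x % 2 = f s % 2) := by
    intro x hx ⟨_, hodd, heven⟩
    refine ⟨by rwa [hkd], rfl, fun s h1 h2 => ?_⟩
    rw [hkd] at h2
    rcases Nat.eq_or_lt_of_le h1 with h3 | h3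
    · subst h3
      rw [hf]
      simp [hodd]
    · rw [heven s h3 h2, hf]
      simp [Nat.ne_of_gt h3]
  apply Finset.card_nbij (fun r => r % 2 ^ k)
  · intro r hr
    rw [Finset.mem_coe, Finset.mem_filter, Finset.mem_range] at hr
    rw [Finset.mem_coe, Finset.mem_filter, Finset.mem_range]
    exact ⟨Nat.mod_lt _ (by positivity), hr.2.1⟩
  · intro r1 h1 r2 h2 heq
    simp only [Finset.coe_filter, Set.mem_setOf_eq, Finset.mem_range] at h1 h2
    obtain ⟨x, -, hu⟩ := extend k f (r1 % 2 ^ k) (Nat.mod_lt _ (by positivity)) (σ - k)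
    have e1 := hu r1 (hsat r1 h1.1 h1.2)
    simp only at heq
    have h5 := hsat r2 h2.1 h2.2
    have e2 := hu r2 ⟨h5.1, heq ▸ rfl, h5.2.2⟩
    rw [e1, e2]
  · intro r' hr'
    simp only [Finset.coe_filter, Set.mem_setOf_eq, Finset.mem_range] at hr'
    obtain ⟨x, ⟨hx1, hx2, hx3⟩, -⟩ := extend k f r' hr'.1 (σ - k)
    rw [hkd] at hx1 hx3
    refine ⟨x, ?_, hx2⟩
    simp only [Finset.coe_filter, Set.mem_setOf_eq, Finset.mem_range]
    refine ⟨hx1, ⟨by rw [hx2]; exact hr'.2, ?_, ?_⟩⟩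
    · have := hx3 k le_rfl hkσ
      rw [hf] at this
      simpa using this
    · intro j hj1 hj2
      have := hx3 j (by omega) hj2
      rw [hf] at this
      simp only [Nat.ne_of_gt hj1, if_neg] at this
      simpa [Nat.ne_of_gt hj1] using this

lemma PA_imp_Pz (n k r : ℕ) (hn : 1 ≤ n) (hnk : n ≤ k) (hk : k ≤ kappa n)
    (h : PA' n k r) : Pz' n r := by
  obtain ⟨⟨hm, hcond⟩, hodd, heven⟩ := h
  have hkσ : k < sigmaN n := by
    have h1 := kappa_mono n hn
    have h2 := sigmaN_eq n
    omega
  have hmk : m k r = n := by rw [← m_mod k k r le_rfl]; exact hm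
  have hml : ∀ j, k + 1 ≤ j → j ≤ sigmaN n → m j r = n + 1 := by
    intro j h1 h2
    rw [m_eventually k r (sigmaN n) hodd heven j h1 h2, hmk]
  constructor
  · intro j hj1 hj2
    rcases le_or_gt j k with h3 | h3
    · rw [← m_mod j k r h3]
      exact hcond j hj1 h3
    · rw [hml j (by omega) (by omega)]
      rw [pow_lt_iff_le_kappa j (n + 1) (by omega)]
      have h2 := sigmaN_eq n
      omega
  · exact hml (sigmaN n) (by omega) le_rfl

lemma Pz_imp_PA (n r : ℕ) (hn : 1 ≤ n) (h : Pz' n r) :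
    ∃ k, n ≤ k ∧ k ≤ kappa n ∧ PA' n k r := by
  obtain ⟨hcond, hm⟩ := h
  obtain ⟨k, hkσ, hodd, heven, hms⟩ := m_max (sigmaN n) r (by omega)
  have hmk : m k r = n := by omega
  have hnk : n ≤ k := by
    have := m_le k r
    omega
  have hk : k ≤ kappa n := by
    rw [← pow_lt_iff_le_kappa k n hn, ← hmk]
    exact hcond k (by omega) hkσ
  refine ⟨k, hnk, hk, ⟨⟨by rw [m_mod k k r le_rfl]; exact hmk, ?_⟩, hodd, heven⟩⟩
  intro j hj1 hj2
  rw [m_mod j k r hj2]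
  exact hcond j hj1 (by omega)

theorem stmt16 (n : ℕ) (hn : 1 ≤ n) :
    z n = ∑ k ∈ Finset.Icc n (kappa n), R k n := by
  classical
  rw [z_card n]
  have hunion : (Finset.range (2 ^ sigmaN n)).filter (Pz' n) =
      (Finset.Icc n (kappa n)).biUnion
        (fun k => (Finset.range (2 ^ sigmaN n)).filter (PA' n k)) := by
    ext r
    simp only [Finset.mem_biUnion, Finset.mem_filter, Finset.mem_range, Finset.mem_Icc]
    constructor
    · rintro ⟨h1, h2⟩
      obtain ⟨k, hk1, hk2, hk3⟩ := Pz_imp_PA n r hn h2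
      exact ⟨k, ⟨hk1, hk2⟩, h1, hk3⟩
    · rintro ⟨k, ⟨hk1, hk2⟩, h1, h2⟩
      exact ⟨h1, PA_imp_Pz n k r hn hk1 hk2 h2⟩
  rw [hunion, Finset.card_biUnion]
  · apply Finset.sum_congr rfl
    intro k hk
    rw [Finset.mem_Icc] at hk
    rw [A_card n k hn hk.1 hk.2, R_card]
  · intro k1 hk1 k2 hk2 hne
    rw [Finset.mem_coe, Finset.mem_Icc] at hk1 hk2
    rw [Function.onFun, Finset.disjoint_left]
    intro r h1 h2
    rw [Finset.mem_filter] at h1 h2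
    have hσ1 : k1 < sigmaN n := by
      have := kappa_mono n hn; have := sigmaN_eq n; omega
    have hσ2 : k2 < sigmaN n := by
      have := kappa_mono n hn; have := sigmaN_eq n; omega
    rcases Nat.lt_or_ge k1 k2 with h3 | h3
    · have := h1.2.2.2 k2 h3 hσ2
      have := h2.2.2.1
      omega
    · have h4 : k2 < k1 := by omega
      have := h2.2.2.2 k1 h4 hσ1
      have := h1.2.2.1
      omega
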